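/- Let φ : (0,∞) → (0,∞) be such that φ and t ↦ t/φ(t) are non-decreasing. Let Λ act transitively on a set X with Schreier metric d_S for a finite symmetric generating set S. Let f be a finitely supported function on Λ with ‖∇^r_S f‖₁ = 1, and for x ∈ X set f_x(y) = Σ_{λ : λ·x = y} |f(λ)|. Then for all x₀, x₁ ∈ X, ‖f‖₁ / ‖f_{x₀} − f_{x₁}‖₁ ≥ φ(‖f‖₁) / (2 φ(d_S(x₀,x₁))). -/

import Mathlib

set_option maxHeartbeats 1000000


/-- The Schreier graph metric on a transitive `Λ`-set induced by a finite symmetric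
generating set `S`. -/
noncomputable def schreierDist {Λ : Type*} [Group Λ] {X : Type*} [MulAction Λ X]
    (S : Finset Λ) (x y : X) : ℕ :=
  sInf {n : ℕ | ∃ l : List Λ, l.length = n ∧ (∀ u ∈ l, u ∈ S ∨ u⁻¹ ∈ S) ∧ l.prod • x = y}

section Aux

variable {α β : Type*}

private lemma fiberSummable (g : α → β) {h : α → ℝ} (hh : Summable h) (y : β) :
    Summable fun l : {l : α // g l = y} => h l.1 :=
  hh.subtype {l | g l = y}

private lemma sigmaSummable (g : α → β) {h : α → ℝ} (hh : Summable h) :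
    Summable (fun p : Σ y : β, {l : α // g l = y} => h p.2.1) :=
  (Equiv.sigmaFiberEquiv g).summable_iff.mpr hh

private lemma outerSummable (g : α → β) {h : α → ℝ} (hh : Summable h) :
    Summable fun y : β => ∑' l : {l : α // g l = y}, h l.1 :=
  (sigmaSummable g hh).sigma

private lemma tsum_fiber_eq (g : α → β) {h : α → ℝ} (hh : Summable h) :
    ∑' y : β, ∑' l : {l : α // g l = y}, h l.1 = ∑' l, h l := by
  rw [← Summable.tsum_sigma (sigmaSummable g hh)]
  exact (Equiv.sigmaFiberEquiv g).tsum_eq h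

end Aux

/-- The pushforward of `|f|` to `X` based at `x`. -/
private noncomputable def pushFx {Λ : Type*} [Group Λ] {X : Type*} [MulAction Λ X]
    (f : Λ → ℝ) (x y : X) : ℝ :=
  ∑' l : {l : Λ // l • x = y}, |f l.1|

/-- Let `φ : (0,∞) → (0,∞)` with `φ` and `t ↦ t/φ(t)` non-decreasing.  Let `Λ` act
transitively on `X` with Schreier metric `d_S`.  Let `f` be finitely supported on `Λ`
with `‖∇^r_S f‖₁ = 1`, and `f_x(y) = Σ_{λ : λ·x = y} |f(λ)|`.  Then for `x₀ ≠ x₁`,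
`‖f‖₁ / ‖f_{x₀} − f_{x₁}‖₁ ≥ φ(‖f‖₁) / (2 φ(d_S(x₀,x₁)))`, stated here in the
equivalent cross-multiplied form. -/
theorem pushforward_l1_quantitative
    {Λ : Type*} [Group Λ] {X : Type*} [MulAction Λ X]
    (S : Finset Λ) (hSgen : Subgroup.closure (S : Set Λ) = ⊤)
    (hSsymm : ∀ s ∈ S, s⁻¹ ∈ S)
    (htrans : ∀ x y : X, ∃ g : Λ, g • x = y)
    (φ : ℝ → ℝ)
    (hφ_pos : ∀ t : ℝ, 0 < t → 0 < φ t)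
    (hφ_mono : ∀ s t : ℝ, 0 < s → s ≤ t → φ s ≤ φ t)
    (hratio : ∀ s t : ℝ, 0 < s → s ≤ t → s / φ s ≤ t / φ t)
    (f : Λ → ℝ) (hfin : (Function.support f).Finite)
    (hgrad : ∑' l : Λ, ∑ s ∈ S, |f l - f (l * s)| = 1)
    (x₀ x₁ : X) (hne : x₀ ≠ x₁) :
    φ (∑' l : Λ, |f l|) *
        (∑' y : X,
          |(∑' l : {l : Λ // l • x₀ = y}, |f l.1|)
            - (∑' l : {l : Λ // l • x₁ = y}, |f l.1|)|)
      ≤ 2 * φ (schreierDist S x₀ x₁ : ℝ) * (∑' l : Λ, |f l|) := by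
  -- basic summability facts
  have hsum_absf : Summable fun l : Λ => |f l| := by
    apply summable_of_ne_finset_zero (s := hfin.toFinset)
    intro l hl
    simp only [Set.Finite.mem_toFinset, Function.mem_support, not_not] at hl
    simp [hl]
  have hsum_shift : ∀ s : Λ, Summable fun l : Λ => |f (l * s)| := by
    intro s
    simpa [Function.comp_def] using (Equiv.mulRight s).summable_iff.mpr hsum_absf
  have hsum_diff : ∀ s : Λ, Summable fun l : Λ => |f l - f (l * s)| := by
    intro s
    refine Summable.of_nonneg_of_le (fun l => abs_nonneg _) (fun l => abs_sub _ _)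
      (hsum_absf.add (hsum_shift s))
  -- reformulate goal via pushFx
  show φ (∑' l : Λ, |f l|) * (∑' y : X, |pushFx f x₀ y - pushFx f x₁ y|)
      ≤ 2 * φ (schreierDist S x₀ x₁ : ℝ) * (∑' l : Λ, |f l|)
  set F : ℝ := ∑' l : Λ, |f l| with hF
  -- pushforward facts
  have hFx_nonneg : ∀ (x y : X), 0 ≤ pushFx f x y := fun x y =>
    tsum_nonneg fun l => abs_nonneg _
  have hFx_sum : ∀ x : X, Summable fun y => pushFx f x y := fun x =>
    outerSummable (fun l : Λ => l • x) hsum_absf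
  have hFx_total : ∀ x : X, ∑' y, pushFx f x y = F := fun x =>
    tsum_fiber_eq (fun l : Λ => l • x) hsum_absf
  have hD_sum : ∀ x x' : X, Summable fun y => |pushFx f x y - pushFx f x' y| := by
    intro x x'
    refine Summable.of_nonneg_of_le (fun y => abs_nonneg _) (fun y => ?_)
      ((hFx_sum x).add (hFx_sum x'))
    calc |pushFx f x y - pushFx f x' y| ≤ |pushFx f x y| + |pushFx f x' y| := abs_sub _ _
      _ = pushFx f x y + pushFx f x' y := by
          rw [abs_of_nonneg (hFx_nonneg x y), abs_of_nonneg (hFx_nonneg x' y)]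
  -- one-step estimate
  have hstep : ∀ (x : X) (s : Λ), s⁻¹ ∈ S →
      ∑' y, |pushFx f x y - pushFx f (s • x) y| ≤ 1 := by
    intro x s hs
    have hFxs : ∀ y : X, pushFx f (s • x) y
        = ∑' l : {l : Λ // l • x = y}, |f (l.1 * s⁻¹)| := by
      intro y
      let e : {μ : Λ // μ • x = y} ≃ {l : Λ // l • (s • x) = y} :=
        { toFun := fun μ => ⟨μ.1 * s⁻¹, by
            rw [mul_smul]; simp [μ.2]⟩
          invFun := fun l => ⟨l.1 * s, by rw [mul_smul]; exact l.2⟩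
          left_inv := fun μ => by ext; simp
          right_inv := fun l => by ext; simp }
      calc pushFx f (s • x) y
          = ∑' μ : {μ : Λ // μ • x = y}, |f ((e μ).1)| :=
            (e.tsum_eq fun l : {l : Λ // l • (s • x) = y} => |f l.1|).symm
        _ = ∑' μ : {μ : Λ // μ • x = y}, |f (μ.1 * s⁻¹)| := tsum_congr fun μ => rfl
    have key : ∀ y : X, |pushFx f x y - pushFx f (s • x) y|
        ≤ ∑' l : {l : Λ // l • x = y}, |f l.1 - f (l.1 * s⁻¹)| := by
      intro y
      rw [hFxs y]
      rw [show pushFx f x y = ∑' l : {l : Λ // l • x = y}, |f l.1| from rfl]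
      rw [← Summable.tsum_sub (fiberSummable (fun l : Λ => l • x) hsum_absf y)
        (fiberSummable (fun l : Λ => l • x) (hsum_shift s⁻¹) y)]
      have hsum1 : Summable fun l : {l : Λ // l • x = y} => |(|f l.1| - |f (l.1 * s⁻¹)|)| := by
        refine Summable.of_nonneg_of_le (fun l => abs_nonneg _)
          (fun l => abs_abs_sub_abs_le_abs_sub _ _)
          (fiberSummable (fun l : Λ => l • x) (hsum_diff s⁻¹) y)
      calc |∑' l : {l : Λ // l • x = y}, (|f l.1| - |f (l.1 * s⁻¹)|)|
          ≤ ∑' l : {l : Λ // l • x = y}, |(|f l.1| - |f (l.1 * s⁻¹)|)| := by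
            have := norm_tsum_le_tsum_norm
              (f := fun l : {l : Λ // l • x = y} => (|f l.1| - |f (l.1 * s⁻¹)|))
              (by simpa [Real.norm_eq_abs] using hsum1)
            simpa [Real.norm_eq_abs] using this
        _ ≤ ∑' l : {l : Λ // l • x = y}, |f l.1 - f (l.1 * s⁻¹)| :=
            Summable.tsum_le_tsum (fun l => abs_abs_sub_abs_le_abs_sub _ _) hsum1
              (fiberSummable (fun l : Λ => l • x) (hsum_diff s⁻¹) y)
    have hsum_gradsum : Summable fun l : Λ => ∑ t ∈ S, |f l - f (l * t)| :=
      summable_sum fun t _ => hsum_diff t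
    calc ∑' y, |pushFx f x y - pushFx f (s • x) y|
        ≤ ∑' y, ∑' l : {l : Λ // l • x = y}, |f l.1 - f (l.1 * s⁻¹)| :=
          Summable.tsum_le_tsum key (hD_sum x (s • x))
            (outerSummable (fun l : Λ => l • x) (hsum_diff s⁻¹))
      _ = ∑' l : Λ, |f l - f (l * s⁻¹)| :=
          tsum_fiber_eq (fun l : Λ => l • x) (hsum_diff s⁻¹)
      _ ≤ ∑' l : Λ, ∑ t ∈ S, |f l - f (l * t)| :=
          Summable.tsum_le_tsum
            (fun l => Finset.single_le_sum (f := fun t => |f l - f (l * t)|)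
              (fun t _ => abs_nonneg _) hs)
            (hsum_diff s⁻¹) hsum_gradsum
      _ = 1 := hgrad
  -- path estimate
  have hpath : ∀ (l : List Λ), (∀ u ∈ l, u ∈ S ∨ u⁻¹ ∈ S) → ∀ x : X,
      ∑' y, |pushFx f x y - pushFx f (l.prod • x) y| ≤ (l.length : ℝ) := by
    intro l
    induction l with
    | nil => intro _ x; simp
    | cons u t ih =>
      intro hmem x
      have hu : u⁻¹ ∈ S := by
        rcases hmem u List.mem_cons_self with h | h
        · exact hSsymm u h
        · exact h
      have hx' : (u :: t).prod • x = u • (t.prod • x) := by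
        rw [List.prod_cons, mul_smul]
      rw [hx']
      set x' := t.prod • x with hx'def
      have h1 : ∑' y, |pushFx f x y - pushFx f x' y| ≤ (t.length : ℝ) :=
        ih (fun v hv => hmem v (List.mem_cons_of_mem u hv)) x
      have h2 : ∑' y, |pushFx f x' y - pushFx f (u • x') y| ≤ 1 := hstep x' u hu
      have tri : ∑' y, |pushFx f x y - pushFx f (u • x') y|
          ≤ (∑' y, |pushFx f x y - pushFx f x' y|)
            + ∑' y, |pushFx f x' y - pushFx f (u • x') y| := by
        rw [← Summable.tsum_add (hD_sum x x') (hD_sum x' (u • x'))]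
        exact Summable.tsum_le_tsum (fun y => abs_sub_le _ _ _) (hD_sum x (u • x'))
          ((hD_sum x x').add (hD_sum x' (u • x')))
      have hlen : ((u :: t).length : ℝ) = (t.length : ℝ) + 1 := by
        simp [List.length_cons]
      rw [hlen]
      linarith
  -- the distance is realized by a word
  set d : ℕ := schreierDist S x₀ x₁ with hd
  have hd_mem : d ∈ {n : ℕ | ∃ l : List Λ,
      l.length = n ∧ (∀ u ∈ l, u ∈ S ∨ u⁻¹ ∈ S) ∧ l.prod • x₀ = x₁} := by
    apply Nat.sInf_mem
    obtain ⟨g, hg⟩ := htrans x₀ x₁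
    have hg1 : g ∈ Subgroup.closure (S : Set Λ) := hSgen ▸ Subgroup.mem_top g
    have hg2 : g ∈ Submonoid.closure ((S : Set Λ) ∪ (S : Set Λ)⁻¹) := by
      rw [← Subgroup.closure_toSubmonoid]; exact hg1
    obtain ⟨w, hw1, hw2⟩ := Submonoid.exists_list_of_mem_closure hg2
    refine ⟨w.length, w, rfl, ?_, by rw [hw2]; exact hg⟩
    intro u hu
    rcases hw1 u hu with h | h
    · exact Or.inl h
    · exact Or.inr (Set.mem_inv.mp h)
  obtain ⟨ld, hld_len, hld_mem, hld_prod⟩ := hd_mem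
  -- D ≤ d
  set D : ℝ := ∑' y, |pushFx f x₀ y - pushFx f x₁ y| with hD
  have hDd : D ≤ (d : ℝ) := by
    have := hpath ld hld_mem x₀
    rw [hld_prod, hld_len] at this
    exact this
  -- d ≥ 1
  have hd_pos : (1 : ℝ) ≤ (d : ℝ) := by
    have : d ≠ 0 := by
      intro h
      rw [h] at hld_len
      have : ld = [] := List.length_eq_zero_iff.mp hld_len
      rw [this] at hld_prod
      simp at hld_prod
      exact hne hld_prod
    exact_mod_cast Nat.one_le_iff_ne_zero.mpr this
  -- F > 0
  have hF_pos : 0 < F := by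
    by_contra h
    push_neg at h
    have hF0 : F = 0 := le_antisymm h (tsum_nonneg fun l => abs_nonneg _)
    have hfl : ∀ l, f l = 0 := by
      intro l
      have h1 : |f l| ≤ F := Summable.le_tsum hsum_absf l fun m _ => abs_nonneg _
      rw [hF0] at h1
      exact abs_eq_zero.mp (le_antisymm h1 (abs_nonneg _))
    simp only [hfl, sub_zero, abs_zero, Finset.sum_const_zero, tsum_zero] at hgrad
    exact zero_ne_one hgrad
  -- D ≤ 2F
  have hD2F : D ≤ 2 * F := by
    have : D ≤ (∑' y, pushFx f x₀ y) + ∑' y, pushFx f x₁ y := by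
      rw [← Summable.tsum_add (hFx_sum x₀) (hFx_sum x₁)]
      refine Summable.tsum_le_tsum (fun y => ?_) (hD_sum x₀ x₁) ((hFx_sum x₀).add (hFx_sum x₁))
      calc |pushFx f x₀ y - pushFx f x₁ y| ≤ |pushFx f x₀ y| + |pushFx f x₁ y| := abs_sub _ _
        _ = pushFx f x₀ y + pushFx f x₁ y := by
            rw [abs_of_nonneg (hFx_nonneg x₀ y), abs_of_nonneg (hFx_nonneg x₁ y)]
    rw [hFx_total x₀, hFx_total x₁] at this
    linarith
  have hD_nonneg : 0 ≤ D := tsum_nonneg fun y => abs_nonneg _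
  have hφF_pos : 0 < φ F := hφ_pos F hF_pos
  have hφd_pos : 0 < φ (d : ℝ) := hφ_pos _ (by linarith)
  -- final case analysis
  rcases le_total F (d : ℝ) with hc | hc
  · have h1 : φ F ≤ φ (d : ℝ) := hφ_mono F (d : ℝ) hF_pos hc
    nlinarith
  · have h1 : (d : ℝ) / φ (d : ℝ) ≤ F / φ F := hratio (d : ℝ) F (by linarith) hc
    have h2 : (d : ℝ) * φ F ≤ F * φ (d : ℝ) := by
      rw [div_le_div_iff₀ hφd_pos hφF_pos] at h1
      linarith
    nlinarith
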